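/- For every function u in H^2(a,b) ∩ H^1_0(a,b), the L^2 norm of u' is bounded by ((b-a)/π) times the L^2 norm of u''. -/

import Mathlib

open Real MeasureTheory Set intervalIntegral

open Filter Topology in

lemma my_lim0 (c k : ℝ) (hk : k ≠ 0) (v : ℝ → ℝ) (hv : DifferentiableAt ℝ v c) (hc : v c = 0) :
    Tendsto (fun ε => v (c + ε) ^ 2 * (k * (Real.cos (k * ε) / Real.sin (k * ε))))
      (𝓝[>] (0:ℝ)) (𝓝 0) := by
  have hmap : Tendsto (fun ε : ℝ => c + ε) (𝓝[≠] (0:ℝ)) (𝓝[≠] c) := by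
    rw [tendsto_nhdsWithin_iff]
    constructor
    · have : Tendsto (fun ε : ℝ => c + ε) (𝓝 0) (𝓝 c) := by
        simpa using (show Continuous (fun ε : ℝ => c + ε) by fun_prop).tendsto (0:ℝ)
      exact this.mono_left nhdsWithin_le_nhds
    · filter_upwards [eventually_mem_nhdsWithin] with ε (hε : ε ≠ 0)
      simpa using hε
  have hslope : Tendsto (fun ε => v (c + ε) / ε) (𝓝[≠] (0:ℝ)) (𝓝 (deriv v c)) := by
    have h1 := hasDerivAt_iff_tendsto_slope.mp hv.hasDerivAt
    have h2 := h1.comp hmap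
    refine h2.congr fun ε => ?_
    simp [Function.comp, slope_def_field, hc]
  have hmapk : Tendsto (fun ε : ℝ => k * ε) (𝓝[≠] (0:ℝ)) (𝓝[≠] (0:ℝ)) := by
    rw [tendsto_nhdsWithin_iff]
    constructor
    · have : Tendsto (fun ε : ℝ => k * ε) (𝓝 0) (𝓝 0) := by
        simpa using (show Continuous (fun ε : ℝ => k * ε) by fun_prop).tendsto (0:ℝ)
      exact this.mono_left nhdsWithin_le_nhds
    · filter_upwards [eventually_mem_nhdsWithin] with ε (hε : ε ≠ 0)
      simp [hk, hε]
  have hsin0 : Tendsto (fun x : ℝ => Real.sin x / x) (𝓝[≠] (0:ℝ)) (𝓝 1) := by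
    have h1 := hasDerivAt_iff_tendsto_slope.mp (Real.hasDerivAt_sin 0)
    rw [Real.cos_zero] at h1
    refine h1.congr fun x => ?_
    simp [slope_def_field]
  have hsin : Tendsto (fun ε : ℝ => k * ε / Real.sin (k * ε)) (𝓝[≠] (0:ℝ)) (𝓝 1) := by
    have h1 := ((hsin0.comp hmapk).inv₀ one_ne_zero)
    rw [inv_one] at h1
    refine h1.congr fun ε => ?_
    simp [Function.comp, inv_div]
  have hcos : Tendsto (fun ε : ℝ => Real.cos (k * ε)) (𝓝[≠] (0:ℝ)) (𝓝 1) := by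
    have : Tendsto (fun ε : ℝ => Real.cos (k * ε)) (𝓝 0) (𝓝 1) := by
      have h := (show Continuous (fun ε : ℝ => Real.cos (k * ε)) by
        fun_prop).tendsto (0:ℝ)
      simpa using h
    exact this.mono_left nhdsWithin_le_nhds
  have hid : Tendsto (fun ε : ℝ => ε) (𝓝[≠] (0:ℝ)) (𝓝 0) :=
    tendsto_id.mono_left nhdsWithin_le_nhds
  have hprod : Tendsto
      (fun ε => (v (c + ε) / ε) ^ 2 * (k * ε / Real.sin (k * ε)) * Real.cos (k * ε) * ε)
      (𝓝[≠] (0:ℝ)) (𝓝 ((deriv v c) ^ 2 * 1 * 1 * 0)) :=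
    (((hslope.pow 2).mul hsin).mul hcos).mul hid
  rw [show (deriv v c) ^ 2 * 1 * 1 * 0 = 0 by ring] at hprod
  have hsub : 𝓝[>] (0:ℝ) ≤ 𝓝[≠] (0:ℝ) :=
    nhdsWithin_mono _ (fun x hx => ne_of_gt hx)
  refine (hprod.mono_left hsub).congr' ?_
  filter_upwards [eventually_mem_nhdsWithin] with ε (hε : ε ∈ Ioi (0:ℝ))
  have hε0 : ε ≠ 0 := ne_of_gt hε
  by_cases hs : Real.sin (k * ε) = 0
  · simp [hs]
  · field_simp


lemma my_cs (a b : ℝ) (hab : a ≤ b) (f g : ℝ → ℝ) (hf : Continuous f) (hg : Continuous g) :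
    (∫ t in a..b, f t * g t) ^ 2 ≤ (∫ t in a..b, f t ^ 2) * (∫ t in a..b, g t ^ 2) := by
  have key : ∀ x : ℝ, 0 ≤ (∫ t in a..b, g t ^ 2) * x ^ 2 + (2 * ∫ t in a..b, f t * g t) * x
      + (∫ t in a..b, f t ^ 2) := by
    intro x
    have h1 : (∫ t in a..b, g t ^ 2) * x ^ 2 + (2 * ∫ t in a..b, f t * g t) * x
        + (∫ t in a..b, f t ^ 2) = ∫ t in a..b, (x * g t + f t) ^ 2 := by
      have e : ∀ t, (x * g t + f t) ^ 2
          = (g t ^ 2) * x ^ 2 + (2 * (f t * g t)) * x + f t ^ 2 := by intro t; ring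
      simp_rw [e]
      rw [intervalIntegral.integral_add, intervalIntegral.integral_add,
        intervalIntegral.integral_mul_const, intervalIntegral.integral_mul_const,
        intervalIntegral.integral_const_mul]
      · exact ((hg.pow 2).mul continuous_const).intervalIntegrable a b
      · exact ((continuous_const.mul (hf.mul hg)).mul continuous_const).intervalIntegrable a b
      · exact (((hg.pow 2).mul continuous_const).add
          (((continuous_const.mul (hf.mul hg))).mul continuous_const)).intervalIntegrable a b
      · exact (hf.pow 2).intervalIntegrable a b
    rw [h1]
    apply intervalIntegral.integral_nonneg hab
    intro t _; positivity
  have hd : discrim (∫ t in a..b, g t ^ 2) (2 * ∫ t in a..b, f t * g t) (∫ t in a..b, f t ^ 2) ≤ 0 := discrim_le_zero (by intro x; have := key x; nlinarith [this])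
  rw [discrim] at hd
  nlinarith [hd]

open Filter Topology in
lemma my_wirtinger (a b : ℝ) (hab : a < b) (u : ℝ → ℝ) (hu : ContDiff ℝ 2 u)
    (ha : u a = 0) (hb : u b = 0) :
    (π / (b - a)) ^ 2 * ∫ t in a..b, u t ^ 2 ≤ ∫ t in a..b, (deriv u t) ^ 2 := by
  set k := π / (b - a) with hkdef
  have hL : (0:ℝ) < b - a := sub_pos.mpr hab
  have hkpos : 0 < k := div_pos pi_pos hL
  have hkL : k * (b - a) = π := div_mul_cancel₀ _ (ne_of_gt hL)
  clear_value k
  have hdu : Differentiable ℝ u := hu.differentiable (by norm_num)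
  have hcu : Continuous u := hdu.continuous
  have hcu' : Continuous (deriv u) := hu.continuous_deriv (by norm_num)
  set h : ℝ → ℝ := fun t => (deriv u t) ^ 2 - k ^ 2 * u t ^ 2 with hhdef
  have hch : Continuous h := (hcu'.pow 2).sub (continuous_const.mul (hcu.pow 2))
  set w : ℝ → ℝ := fun t => u t ^ 2 * (k * (Real.cos (k * (t - a)) / Real.sin (k * (t - a))))
    with hwdef
  set dw : ℝ → ℝ := fun t => 2 * u t * deriv u t * (k * (Real.cos (k * (t - a)) / Real.sin (k * (t - a))))
      - k ^ 2 * u t ^ 2 / Real.sin (k * (t - a)) ^ 2 with hdwdef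
  have hsinpos : ∀ t ∈ Ioo a b, 0 < Real.sin (k * (t - a)) := by
    intro t ht
    apply Real.sin_pos_of_pos_of_lt_pi
    · exact mul_pos hkpos (sub_pos.mpr ht.1)
    · rw [← hkL]
      exact (mul_lt_mul_iff_right₀ hkpos).mpr (by linarith [ht.2])
  -- derivative of w
  have hw : ∀ t ∈ Ioo a b, HasDerivAt w (dw t) t := by
    intro t ht
    have hs := ne_of_gt (hsinpos t ht)
    have h1 : HasDerivAt (fun x => k * (x - a)) k t := by
      simpa using ((hasDerivAt_id t).sub_const a).const_mul k
    have hsin : HasDerivAt (fun x => Real.sin (k * (x - a))) (Real.cos (k * (t - a)) * k) t :=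
      (Real.hasDerivAt_sin _).comp t h1
    have hcos : HasDerivAt (fun x => Real.cos (k * (x - a))) (-Real.sin (k * (t - a)) * k) t :=
      (Real.hasDerivAt_cos _).comp t h1
    have hdiv := hcos.fun_div hsin hs
    have hu2 : HasDerivAt (fun x => u x ^ 2) (2 * u t * deriv u t) t := by
      have := (hdu t).hasDerivAt.fun_pow 2
      simpa [mul_comm] using this
    have pyth := Real.sin_sq_add_cos_sq (k * (t - a))
    have e : -Real.sin (k * (t - a)) * k * Real.sin (k * (t - a))
        - Real.cos (k * (t - a)) * (Real.cos (k * (t - a)) * k) = -k := by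
      linear_combination (-k) * pyth
    rw [e] at hdiv
    have hmul := hu2.fun_mul (hdiv.const_mul k)
    refine hmul.congr_deriv ?_
    simp only [hdwdef]
    field_simp
    ring
  -- pointwise identity
  have hkey : ∀ t ∈ Ioo a b, h t - dw t
      = (deriv u t - u t * (k * (Real.cos (k * (t - a)) / Real.sin (k * (t - a))))) ^ 2 := by
    intro t ht
    have hs := ne_of_gt (hsinpos t ht)
    have pyth := Real.sin_sq_add_cos_sq (k * (t - a))
    simp only [hhdef, hdwdef]
    field_simp
    linear_combination (-(k ^ 2 * u t ^ 2)) * pyth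
  -- primitive
  set H : ℝ → ℝ := fun x => ∫ t in a..x, h t with hHdef
  have hHcont : Continuous H :=
    intervalIntegral.continuous_primitive (fun c d => hch.intervalIntegrable c d) a
  -- per-epsilon inequality
  have hineq : ∀ ε ∈ Ioo (0:ℝ) ((b - a) / 2),
      w (b - ε) - w (a + ε) ≤ H (b - ε) - H (a + ε) := by
    intro ε hε
    obtain ⟨hε0, hε2⟩ := hε
    have hle : a + ε ≤ b - ε := by linarith
    have hsub : Set.uIcc (a + ε) (b - ε) ⊆ Ioo a b := by
      rw [Set.uIcc_of_le hle]
      intro x hx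
      exact ⟨by linarith [hx.1], by linarith [hx.2]⟩
    have hsne : ∀ x ∈ Set.uIcc (a + ε) (b - ε), Real.sin (k * (x - a)) ≠ 0 :=
      fun x hx => ne_of_gt (hsinpos x (hsub hx))
    have hcs : Continuous fun x : ℝ => Real.cos (k * (x - a)) :=
      Real.continuous_cos.comp (continuous_const.mul (continuous_id.sub continuous_const))
    have hss : Continuous fun x : ℝ => Real.sin (k * (x - a)) :=
      Real.continuous_sin.comp (continuous_const.mul (continuous_id.sub continuous_const))
    have hdw_cont : ContinuousOn dw (Set.uIcc (a + ε) (b - ε)) := by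
      apply ContinuousOn.sub
      · exact (((continuous_const.mul hcu).mul hcu').continuousOn).mul
          (continuousOn_const.mul (hcs.continuousOn.div hss.continuousOn hsne))
      · exact (continuous_const.mul (hcu.pow 2)).continuousOn.div
          ((hss.pow 2).continuousOn) (fun x hx => pow_ne_zero 2 (hsne x hx))
    have hdw_int : IntervalIntegrable dw volume (a + ε) (b - ε) :=
      hdw_cont.intervalIntegrable
    have hftc : ∫ t in (a+ε)..(b-ε), dw t = w (b - ε) - w (a + ε) :=
      intervalIntegral.integral_eq_sub_of_hasDerivAt (fun x hx => hw x (hsub hx)) hdw_int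
    have hHdiff : H (b - ε) - H (a + ε) = ∫ t in (a+ε)..(b-ε), h t := by
      simp only [hHdef]
      exact (intervalIntegral.integral_interval_sub_left (μ := volume) (hch.intervalIntegrable a (b-ε))
        (hch.intervalIntegrable a (a+ε)))
    have hnn : 0 ≤ ∫ t in (a+ε)..(b-ε), (h t - dw t) := by
      rw [intervalIntegral.integral_congr (g := fun t => (deriv u t
          - u t * (k * (Real.cos (k * (t - a)) / Real.sin (k * (t - a))))) ^ 2)
          (fun x hx => hkey x (hsub hx))]
      exact intervalIntegral.integral_nonneg hle (fun t _ => sq_nonneg _)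
    rw [intervalIntegral.integral_sub (hch.intervalIntegrable _ _) hdw_int, hftc] at hnn
    rw [hHdiff]
    linarith [hnn]
  -- limits
  have hlimH : Tendsto (fun ε => H (b - ε) - H (a + ε)) (𝓝[>] (0:ℝ)) (𝓝 (H b)) := by
    have h1 : Tendsto (fun ε : ℝ => H (b - ε) - H (a + ε)) (𝓝 0) (𝓝 (H b - H a)) := by
      exact ((hHcont.comp (continuous_const.sub continuous_id)).sub
        (hHcont.comp (continuous_const.add continuous_id))).tendsto' 0 _ (by simp)
    have : H a = 0 := by simp [hHdef]
    rw [this, sub_zero] at h1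
    exact h1.mono_left nhdsWithin_le_nhds
  have hlimW : Tendsto (fun ε => w (b - ε) - w (a + ε)) (𝓝[>] (0:ℝ)) (𝓝 0) := by
    have hla : Tendsto (fun ε => w (a + ε)) (𝓝[>] (0:ℝ)) (𝓝 0) := by
      refine (my_lim0 a k (ne_of_gt hkpos) u (hdu a) ha).congr fun ε => ?_
      simp [hwdef, add_sub_cancel_left]
    have hlb : Tendsto (fun ε => w (b - ε)) (𝓝[>] (0:ℝ)) (𝓝 0) := by
      set v : ℝ → ℝ := fun x => u (2 * b - x) with hvdef
      have hv : DifferentiableAt ℝ v b := by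
        have : DifferentiableAt ℝ (fun x : ℝ => 2 * b - x) b :=
          (differentiable_const (2 * b)).differentiableAt.sub differentiableAt_id
        exact DifferentiableAt.comp b (hdu (2 * b - b)) this
      have hvb : v b = 0 := by
        have : 2 * b - b = b := by ring
        simp [hvdef, this, hb]
      have hlb0 := my_lim0 b k (ne_of_gt hkpos) v hv hvb
      have := hlb0.neg
      rw [neg_zero] at this
      refine this.congr fun ε => ?_
      have e1 : 2 * b - (b + ε) = b - ε := by ring
      have harg : k * ((b - ε) - a) = π - k * ε := by rw [← hkL]; ring
      simp only [hwdef, hvdef, e1, harg, Real.cos_pi_sub, Real.sin_pi_sub]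
      ring
    have := hlb.sub hla
    simpa using this
  -- conclude 0 ≤ H b
  have hHb : 0 ≤ H b := by
    have := le_of_tendsto_of_tendsto hlimW hlimH ?_
    · exact this
    · filter_upwards [Ioo_mem_nhdsGT (by linarith : (0:ℝ) < (b - a) / 2)] with ε hε
      exact hineq ε hε
  -- unfold
  have hsplit : H b = (∫ t in a..b, (deriv u t) ^ 2) - k ^ 2 * ∫ t in a..b, u t ^ 2 := by
    simp only [hHdef, hhdef]
    rw [intervalIntegral.integral_sub (f := fun t => deriv u t ^ 2) (g := fun t => k ^ 2 * u t ^ 2) ((hcu'.pow 2).intervalIntegrable a b)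
      ((continuous_const.mul (hcu.pow 2)).intervalIntegrable a b),
      intervalIntegral.integral_const_mul]
  rw [hsplit] at hHb
  linarith [hHb]

/-- For `u ∈ H²(a,b) ∩ H¹₀(a,b)`, `‖u'‖_{L²} ≤ ((b-a)/π) ‖u''‖_{L²}`. -/
theorem stmt_1 (a b : ℝ) (hab : a < b) (u : ℝ → ℝ)
    (hu : ContDiff ℝ 2 u) (ha : u a = 0) (hb : u b = 0) :
    Real.sqrt (∫ t in a..b, (deriv u t) ^ 2) ≤
      ((b - a) / π) * Real.sqrt (∫ t in a..b, (deriv (deriv u) t) ^ 2) := by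
  have hL : (0:ℝ) < b - a := sub_pos.mpr hab
  have hdu : Differentiable ℝ u := hu.differentiable (by norm_num)
  have hcu : Continuous u := hdu.continuous
  have hcu' : Continuous (deriv u) := hu.continuous_deriv (by norm_num)
  have hd1 : ContDiff ℝ 1 (deriv u) := by
    have h2 : ContDiff ℝ (1 + 1) u := by exact_mod_cast hu
    exact (contDiff_succ_iff_deriv.mp h2).2.2
  have hdu' : Differentiable ℝ (deriv u) := (contDiff_one_iff_deriv.mp hd1).1
  have hcu'' : Continuous (deriv (deriv u)) := (contDiff_one_iff_deriv.mp hd1).2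
  set I0 := ∫ t in a..b, u t ^ 2 with hI0
  set I1 := ∫ t in a..b, (deriv u t) ^ 2 with hI1
  set I2 := ∫ t in a..b, (deriv (deriv u) t) ^ 2 with hI2
  have hI0nn : 0 ≤ I0 := intervalIntegral.integral_nonneg hab.le (fun t _ => sq_nonneg _)
  have hI1nn : 0 ≤ I1 := intervalIntegral.integral_nonneg hab.le (fun t _ => sq_nonneg _)
  have hI2nn : 0 ≤ I2 := intervalIntegral.integral_nonneg hab.le (fun t _ => sq_nonneg _)
  -- integration by parts : I1 = - ∫ u u''
  have hparts : I1 + (∫ t in a..b, u t * deriv (deriv u) t) = 0 := by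
    have hF : ∀ t ∈ Set.uIcc a b,
        HasDerivAt (fun x => u x * deriv u x)
          ((deriv u t) ^ 2 + u t * deriv (deriv u) t) t := by
      intro t _
      have := (hdu t).hasDerivAt.fun_mul (hdu' t).hasDerivAt
      simpa [sq] using this
    have hint : IntervalIntegrable (fun t => (deriv u t) ^ 2 + u t * deriv (deriv u) t)
        volume a b := ((hcu'.pow 2).add (hcu.mul hcu'')).intervalIntegrable a b
    have hftc := intervalIntegral.integral_eq_sub_of_hasDerivAt hF hint
    rw [hb, ha] at hftc
    rw [intervalIntegral.integral_add (f := fun t => deriv u t ^ 2) (g := fun t => u t * deriv (deriv u) t) ((hcu'.pow 2).intervalIntegrable a b)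
      ((hcu.mul hcu'').intervalIntegrable a b)] at hftc
    simpa using hftc
  -- Cauchy-Schwarz
  have hcs : (∫ t in a..b, u t * deriv (deriv u) t) ^ 2 ≤ I0 * I2 :=
    my_cs a b hab.le u (deriv (deriv u)) hcu hcu''
  have hI1le : I1 ≤ Real.sqrt I0 * Real.sqrt I2 := by
    have h1 : I1 = -(∫ t in a..b, u t * deriv (deriv u) t) := by linarith
    have h2 : I1 ≤ |∫ t in a..b, u t * deriv (deriv u) t| := by
      rw [h1]; exact neg_le_abs _
    calc I1 ≤ |∫ t in a..b, u t * deriv (deriv u) t| := h2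
      _ = Real.sqrt ((∫ t in a..b, u t * deriv (deriv u) t) ^ 2) := (Real.sqrt_sq_eq_abs _).symm
      _ ≤ Real.sqrt (I0 * I2) := Real.sqrt_le_sqrt hcs
      _ = Real.sqrt I0 * Real.sqrt I2 := Real.sqrt_mul hI0nn _
  -- Wirtinger
  have hwirt := my_wirtinger a b hab u hu ha hb
  have hk : (0:ℝ) < π / (b - a) := div_pos pi_pos hL
  have hsq : Real.sqrt I0 ≤ ((b - a) / π) * Real.sqrt I1 := by
    have h1 : I0 ≤ ((b - a) / π) ^ 2 * I1 := by
      have h2 : ((b - a) / π) ^ 2 * ((π / (b - a)) ^ 2 * I0) ≤ ((b - a) / π) ^ 2 * I1 :=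
        mul_le_mul_of_nonneg_left hwirt (by positivity)
      have h3 : ((b - a) / π) ^ 2 * ((π / (b - a)) ^ 2) = 1 := by
        field_simp
      nlinarith [h2, h3]
    calc Real.sqrt I0 ≤ Real.sqrt (((b - a) / π) ^ 2 * I1) := Real.sqrt_le_sqrt h1
      _ = ((b - a) / π) * Real.sqrt I1 := by
        rw [Real.sqrt_mul (by positivity), Real.sqrt_sq (by positivity)]
  -- combine
  have hA2 : Real.sqrt I1 ^ 2 = I1 := Real.sq_sqrt hI1nn
  have hfin : Real.sqrt I1 ^ 2 ≤ ((b - a) / π) * Real.sqrt I1 * Real.sqrt I2 := by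
    rw [hA2]
    calc I1 ≤ Real.sqrt I0 * Real.sqrt I2 := hI1le
      _ ≤ ((b - a) / π) * Real.sqrt I1 * Real.sqrt I2 :=
        mul_le_mul_of_nonneg_right hsq (Real.sqrt_nonneg _)
  rcases eq_or_lt_of_le (Real.sqrt_nonneg I1) with hA | hA
  · rw [← hA]
    positivity
  · nlinarith [hfin, hA]
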